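/- The measure μ is not absolutely continuous with respect to Haar (Lebesgue) measure on 𝕋; indeed μ̂(1) ≠ 0 and μ̂(2^n) = μ̂(1) for all n ≥ 0, so the Fourier–Stieltjes coefficients μ̂(k) do not tend to 0 as |k| → ∞. -/

import Mathlib

open MeasureTheory Filter Topology Real
open scoped ENNReal

noncomputable section

/-- Stern's diatomic sequence: s(0)=0, s(1)=1, s(2n)=s(n), s(2n+1)=s(n)+s(n+1). -/
def stern : ℕ → ℕ
  | 0 => 0
  | 1 => 1
  | n + 2 =>
    if h : n % 2 = 0 then stern (n / 2 + 1)
    else stern (n / 2 + 1) + stern (n / 2 + 2)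
decreasing_by all_goals omega

/-- The probability measure μ_n = 3^{-n} ∑_{m=0}^{2^n-1} s(2^n+m) δ_{m/2^n} on the 1-torus. -/
def sternMeasure (n : ℕ) : Measure UnitAddCircle :=
  ((3 : ℝ≥0∞) ^ n)⁻¹ • ∑ m ∈ Finset.range (2 ^ n),
    (stern (2 ^ n + m) : ℝ≥0∞) • Measure.dirac ((m / 2 ^ n : ℝ) : UnitAddCircle)

lemma stern_two_mul (n : ℕ) (h : 1 ≤ n) : stern (2 * n) = stern n := by
  obtain ⟨m, rfl⟩ : ∃ m, n = m + 1 := ⟨n - 1, by omega⟩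
  have : 2 * (m + 1) = 2 * m + 2 := by ring
  rw [this, stern]
  have h1 : (2 * m) % 2 = 0 := by omega
  have h2 : (2 * m) / 2 = m := by omega
  simp [h1, h2]

lemma stern_two_mul_add_one (n : ℕ) (h : 1 ≤ n) :
    stern (2 * n + 1) = stern n + stern (n + 1) := by
  obtain ⟨m, rfl⟩ : ∃ m, n = m + 1 := ⟨n - 1, by omega⟩
  have : 2 * (m + 1) + 1 = (2 * m + 1) + 2 := by ring
  rw [this, stern]
  have h1 : (2 * m + 1) % 2 = 1 := by omega
  have h2 : (2 * m + 1) / 2 = m := by omega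
  simp [h1, h2]

lemma stern_one : stern 1 = 1 := by rw [stern]

lemma stern_two_pow (n : ℕ) : stern (2 ^ n) = 1 := by
  induction n with
  | zero => exact stern_one
  | succ n ih => rw [pow_succ, mul_comm, stern_two_mul _ Nat.one_le_two_pow, ih]

def sternExp (k : ℤ) (n m : ℕ) : ℂ := Complex.exp (2 * π * Complex.I * (-k) * m / 2 ^ n)

def sternS (k : ℤ) (n : ℕ) : ℂ :=
  ∑ m ∈ Finset.range (2 ^ n), (stern (2 ^ n + m) : ℂ) * sternExp k n m

def sternP (k : ℤ) (n : ℕ) : ℝ :=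
  ∏ j ∈ Finset.range n, (1 + 2 * Real.cos (π * k / 2 ^ j))

lemma sternExp_zero (k : ℤ) (n : ℕ) : sternExp k n 0 = 1 := by
  simp [sternExp]

lemma sternExp_add (k : ℤ) (n a b : ℕ) :
    sternExp k n (a + b) = sternExp k n a * sternExp k n b := by
  rw [sternExp, sternExp, sternExp, ← Complex.exp_add]
  congr 1
  push_cast
  ring

lemma sternExp_two_pow (k : ℤ) (n : ℕ) : sternExp k n (2 ^ n) = 1 := by
  rw [sternExp]
  have h2 : (2 : ℂ) ^ n ≠ 0 := pow_ne_zero _ two_ne_zero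
  have : 2 * π * Complex.I * (-k) * (2 ^ n : ℕ) / 2 ^ n = (-k : ℤ) * (2 * π * Complex.I) := by
    push_cast
    field_simp
  rw [this, Complex.exp_int_mul_two_pi_mul_I]

lemma sternExp_double (k : ℤ) (n j : ℕ) : sternExp k (n + 1) (2 * j) = sternExp k n j := by
  rw [sternExp, sternExp]
  congr 1
  have h2 : (2 : ℂ) ^ n ≠ 0 := pow_ne_zero _ two_ne_zero
  push_cast
  rw [pow_succ]
  field_simp

lemma sternExp_one_succ (k : ℤ) (n : ℕ) :
    sternExp k (n + 1) 1 = Complex.exp (-((π * k / 2 ^ n : ℝ) : ℂ) * Complex.I) := by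
  rw [sternExp]
  congr 1
  have h2 : (2 : ℂ) ^ n ≠ 0 := pow_ne_zero _ two_ne_zero
  push_cast
  rw [pow_succ]
  field_simp

lemma sum_range_two_mul (f : ℕ → ℂ) (N : ℕ) :
    ∑ m ∈ Finset.range (2 * N), f m = ∑ j ∈ Finset.range N, (f (2 * j) + f (2 * j + 1)) := by
  induction N with
  | zero => simp
  | succ N ih =>
      have : 2 * (N + 1) = (2 * N + 1) + 1 := by ring
      rw [this, Finset.sum_range_succ, Finset.sum_range_succ, ih, Finset.sum_range_succ,
        add_assoc]

lemma sternS_shift (k : ℤ) (n : ℕ) :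
    sternExp k n 1 * (∑ j ∈ Finset.range (2 ^ n),
      (stern (2 ^ n + (j + 1)) : ℂ) * sternExp k n j) = sternS k n := by
  rw [Finset.mul_sum]
  have h1 : ∀ j, sternExp k n 1 * ((stern (2 ^ n + (j + 1)) : ℂ) * sternExp k n j)
      = (stern (2 ^ n + (j + 1)) : ℂ) * sternExp k n (j + 1) := by
    intro j
    rw [sternExp_add]
    ring
  simp_rw [h1]
  have h2 : ∑ j ∈ Finset.range (2 ^ n), (stern (2 ^ n + (j + 1)) : ℂ) * sternExp k n (j + 1)
      = ∑ j ∈ Finset.range (2 ^ n + 1), (stern (2 ^ n + j) : ℂ) * sternExp k n j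
        - (stern (2 ^ n + 0) : ℂ) * sternExp k n 0 := by
    rw [Finset.sum_range_succ']
    ring
  have h3 : 2 ^ n + 2 ^ n = 2 ^ (n + 1) := by ring
  have h4 : 2 ^ n + 0 = 2 ^ n := rfl
  rw [h2, Finset.sum_range_succ, sternExp_zero, sternExp_two_pow, h3, h4,
    stern_two_pow, stern_two_pow, sternS]
  push_cast
  ring

lemma sternS_succ (k : ℤ) (n : ℕ) :
    sternS k (n + 1) = ((1 + 2 * Real.cos (π * k / 2 ^ n) : ℝ) : ℂ) * sternS k n := by
  set θ : ℝ := π * k / 2 ^ n with hθ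
  set w : ℂ := Complex.exp (-(θ : ℂ) * Complex.I) with hwdef
  set v : ℂ := Complex.exp ((θ : ℂ) * Complex.I) with hvdef
  have hw : sternExp k (n + 1) 1 = w := sternExp_one_succ k n
  have hvw : v * w = 1 := by
    rw [hwdef, hvdef, ← Complex.exp_add,
      show (θ : ℂ) * Complex.I + -(θ : ℂ) * Complex.I = 0 by ring, Complex.exp_zero]
  have hζ : sternExp k n 1 = w * w := by
    have := sternExp_add k (n + 1) 1 1
    rw [hw] at this
    rw [← this]
    have h2 : (2 : ℕ) = 2 * 1 := rfl
    rw [show (1 : ℕ) + 1 = 2 * 1 by rfl, sternExp_double]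
  have hA := sternS_shift k n
  set A : ℂ := ∑ j ∈ Finset.range (2 ^ n),
      (stern (2 ^ n + (j + 1)) : ℂ) * sternExp k n j with hAdef
  have hwA : w * A = v * sternS k n := by
    have : w * A = v * (sternExp k n 1 * A) := by
      rw [hζ, ← mul_assoc, ← mul_assoc, hvw, one_mul]
    rw [this, hA]
  -- split the sum
  have h2pow : 2 ^ (n + 1) = 2 * 2 ^ n := by ring
  rw [sternS, h2pow, sum_range_two_mul]
  have hterm : ∀ j ∈ Finset.range (2 ^ n),
      ((stern (2 * 2 ^ n + 2 * j) : ℂ) * sternExp k (n + 1) (2 * j)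
        + (stern (2 * 2 ^ n + (2 * j + 1)) : ℂ) * sternExp k (n + 1) (2 * j + 1))
      = (stern (2 ^ n + j) : ℂ) * sternExp k n j
        + w * ((stern (2 ^ n + j) : ℂ) * sternExp k n j)
        + w * ((stern (2 ^ n + (j + 1)) : ℂ) * sternExp k n j) := by
    intro j _
    have e1 : 2 * 2 ^ n + 2 * j = 2 * (2 ^ n + j) := by ring
    have e2 : 2 * 2 ^ n + (2 * j + 1) = 2 * (2 ^ n + j) + 1 := by ring
    have e3 : 2 ^ n + j + 1 = 2 ^ n + (j + 1) := by ring
    rw [e1, e2, stern_two_mul _ (by have := Nat.one_le_two_pow (n := n); omega),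
      stern_two_mul_add_one _ (by have := Nat.one_le_two_pow (n := n); omega),
      sternExp_double, sternExp_add, sternExp_double, hw, e3]
    push_cast
    ring
  rw [Finset.sum_congr rfl hterm]
  rw [Finset.sum_add_distrib, Finset.sum_add_distrib, ← Finset.mul_sum, ← Finset.mul_sum,
    ← hAdef, hwA]
  have hSn : ∑ j ∈ Finset.range (2 ^ n), (stern (2 ^ n + j) : ℂ) * sternExp k n j
      = sternS k n := rfl
  rw [hSn]
  have h2c : 2 * Complex.cos (θ : ℂ) = v + w := by
    rw [Complex.two_cos, hwdef, hvdef, neg_mul]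
  push_cast
  linear_combination -sternS k n * h2c

lemma sternP_succ (k : ℤ) (n : ℕ) :
    sternP k (n + 1) = (1 + 2 * Real.cos (π * k / 2 ^ n)) * sternP k n := by
  rw [sternP, sternP, Finset.prod_range_succ]
  ring

lemma sternS_eq (k : ℤ) (n : ℕ) : sternS k n = ((sternP k n : ℝ) : ℂ) := by
  induction n with
  | zero =>
      rw [sternS, sternP]
      simp [sternExp_zero, stern_one]
  | succ n ih =>
      rw [sternS_succ, ih, sternP_succ]
      push_cast
      ring

lemma sternP_two_pow_shift (m t : ℕ) : sternP (2 ^ m) (m + t) = 3 ^ m * sternP 1 t := by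
  rw [sternP, Finset.prod_range_add]
  have h1 : ∀ j ∈ Finset.range m, (1 + 2 * Real.cos (π * ((2 ^ m : ℤ) : ℝ) / 2 ^ j)) = 3 := by
    intro j hj
    rw [Finset.mem_range] at hj
    obtain ⟨a, rfl⟩ : ∃ a, m = j + (a + 1) := ⟨m - j - 1, by omega⟩
    have key : π * (((2 ^ (j + (a + 1)) : ℤ)) : ℝ) / 2 ^ j = ((2 ^ a : ℕ) : ℝ) * (2 * π) := by
      push_cast
      rw [div_eq_iff (by positivity), pow_add]
      ring
    rw [key, Real.cos_nat_mul_two_pi]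
    norm_num
  rw [Finset.prod_congr rfl h1, Finset.prod_const]
  have h2 : ∀ i, (1 + 2 * Real.cos (π * ((2 ^ m : ℤ) : ℝ) / 2 ^ (m + i)))
      = (1 + 2 * Real.cos (π * ((1 : ℤ) : ℝ) / 2 ^ i)) := by
    intro i
    have harg : π * (((2 ^ m : ℤ)) : ℝ) / 2 ^ (m + i) = π * ((1 : ℤ) : ℝ) / 2 ^ i := by
      push_cast
      rw [pow_add, div_eq_div_iff (by positivity) (by positivity)]
      ring
    rw [harg]
  simp_rw [h2]
  rw [sternP]
  norm_num

lemma sternP_one_zero : sternP 1 0 = 1 := by simp [sternP]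

lemma sternP_one_two : sternP 1 (0 + 2) = -1 := by
  rw [sternP, Finset.prod_range_succ, Finset.prod_range_succ, Finset.prod_range_zero]
  have c0 : π * ((1 : ℤ) : ℝ) / 2 ^ 0 = π := by push_cast; ring
  have c1 : π * ((1 : ℤ) : ℝ) / 2 ^ 1 = π / 2 := by push_cast; ring
  rw [c0, c1, Real.cos_pi, Real.cos_pi_div_two]
  norm_num

def sternQ (j : ℕ) : ℝ := 1 + 2 * Real.cos (π / 2 ^ j)

lemma sternP_one_eq (n : ℕ) : sternP 1 n = ∏ j ∈ Finset.range n, sternQ j := by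
  rw [sternP]
  refine Finset.prod_congr rfl fun j _ => ?_
  rw [sternQ]
  norm_num

lemma sternQ_le_three (j : ℕ) : sternQ j ≤ 3 := by
  have := Real.cos_le_one (π / 2 ^ j)
  rw [sternQ]; nlinarith

lemma sternQ_ge (j : ℕ) : 3 - π ^ 2 / 4 ^ j ≤ sternQ j := by
  have h := Real.one_sub_sq_div_two_le_cos (x := π / 2 ^ j)
  have h4 : ((4 : ℝ)) ^ j = (2 ^ j) ^ 2 := by
    rw [← pow_mul, mul_comm, pow_mul]; norm_num
  have h2 : (0:ℝ) < 2 ^ j := by positivity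
  have : (π / 2 ^ j) ^ 2 = π ^ 2 / 4 ^ j := by
    rw [div_pow, h4]
  rw [sternQ]
  nlinarith

lemma sternQ_nonneg (j : ℕ) (hj : 1 ≤ j) : 0 ≤ sternQ j := by
  have h2 : (2:ℝ) ≤ 2 ^ j := by
    calc (2:ℝ) = 2 ^ 1 := by norm_num
      _ ≤ 2 ^ j := pow_le_pow_right₀ (by norm_num) hj
  have h1 : 0 ≤ π / 2 ^ j := by positivity
  have hle : π / 2 ^ j ≤ π / 2 := by
    gcongr
  have hc : 0 ≤ Real.cos (π / 2 ^ j) :=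
    Real.cos_nonneg_of_mem_Icc ⟨by linarith [Real.pi_pos], hle⟩
  rw [sternQ]; linarith

lemma pi_sq_lt : π ^ 2 < 10 := by
  have h1 : π < 3.15 := Real.pi_lt_d2
  have h2 : 0 < π := Real.pi_pos
  nlinarith

lemma stern_sum_eq (t : ℕ) :
    ∑ i ∈ Finset.range t, π ^ 2 / 3 / 4 ^ (2 + i) = π ^ 2 / 36 * (1 - (1 / 4) ^ t) := by
  induction t with
  | zero => simp
  | succ t ih =>
      rw [Finset.sum_range_succ, ih]
      have h4 : (0:ℝ) < 4 ^ t := by positivity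
      simp only [one_div, inv_pow]
      field_simp
      ring

lemma stern_tail_prod_ge (t : ℕ) :
    3 ^ t * (1 - ∑ i ∈ Finset.range t, π ^ 2 / 3 / 4 ^ (2 + i))
      ≤ ∏ i ∈ Finset.range t, sternQ (2 + i) := by
  induction t with
  | zero => simp
  | succ t ih =>
      rw [Finset.sum_range_succ, Finset.prod_range_succ]
      have hs : ∑ i ∈ Finset.range t, π ^ 2 / 3 / 4 ^ (2 + i) ≤ π ^ 2 / 36 := by
        rw [stern_sum_eq]
        have : (0:ℝ) < (1/4) ^ t := by positivity
        have hpi : (0:ℝ) ≤ π ^ 2 := sq_nonneg π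
        nlinarith
      have hs1 : 1 - ∑ i ∈ Finset.range t, π ^ 2 / 3 / 4 ^ (2 + i) ≥ 0 := by
        have := pi_sq_lt
        nlinarith
      have hQ := sternQ_ge (2 + t)
      have hQ0 := sternQ_nonneg (2 + t) (by omega)
      have hb : (0:ℝ) ≤ π ^ 2 / 4 ^ (2 + t) := by positivity
      have step1 : 3 ^ t * (1 - ∑ i ∈ Finset.range t, π ^ 2 / 3 / 4 ^ (2 + i)) * sternQ (2 + t)
          ≤ (∏ i ∈ Finset.range t, sternQ (2 + i)) * sternQ (2 + t) :=
        mul_le_mul_of_nonneg_right ih hQ0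
      refine le_trans ?_ step1
      set s := ∑ i ∈ Finset.range t, π ^ 2 / 3 / 4 ^ (2 + i)
      have h3t : (0:ℝ) < 3 ^ t := by positivity
      have key : (1 - (s + π ^ 2 / 3 / 4 ^ (2 + t))) * 3 ≤ (1 - s) * sternQ (2 + t) := by
        have hss : (0:ℝ) ≤ s :=
          Finset.sum_nonneg fun i _ => by positivity
        calc (1 - (s + π ^ 2 / 3 / 4 ^ (2 + t))) * 3
            = (1 - s) * 3 - π ^ 2 / 4 ^ (2 + t) := by ring
          _ ≤ (1 - s) * (3 - π ^ 2 / 4 ^ (2 + t)) := by nlinarith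
          _ ≤ (1 - s) * sternQ (2 + t) := mul_le_mul_of_nonneg_left hQ hs1
      calc (3:ℝ) ^ (t + 1) * (1 - (s + π ^ 2 / 3 / 4 ^ (2 + t)))
          = 3 ^ t * ((1 - (s + π ^ 2 / 3 / 4 ^ (2 + t))) * 3) := by ring
        _ ≤ 3 ^ t * ((1 - s) * sternQ (2 + t)) := by
            exact mul_le_mul_of_nonneg_left key (le_of_lt h3t)
        _ = 3 ^ t * (1 - s) * sternQ (2 + t) := by ring

lemma sternP_upper (t : ℕ) :
    sternP 1 (2 + t) / 3 ^ (2 + t) ≤ -((1 - π ^ 2 / 36) / 9) := by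
  have hsplit : sternP 1 (2 + t) = (sternQ 0 * sternQ 1) * ∏ i ∈ Finset.range t, sternQ (2 + i) := by
    rw [sternP_one_eq, Finset.prod_range_add]
    congr 1
    rw [Finset.prod_range_succ, Finset.prod_range_one]
  have hQ0 : sternQ 0 = -1 := by
    rw [sternQ]; norm_num [Real.cos_pi]
  have hQ1 : sternQ 1 = 1 := by
    rw [sternQ]
    norm_num [Real.cos_pi_div_two]
  have htail : 3 ^ t * (1 - π ^ 2 / 36) ≤ ∏ i ∈ Finset.range t, sternQ (2 + i) := by
    refine le_trans ?_ (stern_tail_prod_ge t)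
    have hs : ∑ i ∈ Finset.range t, π ^ 2 / 3 / 4 ^ (2 + i) ≤ π ^ 2 / 36 := by
      rw [stern_sum_eq]
      have : (0:ℝ) < (1/4) ^ t := by positivity
      have hpi : (0:ℝ) ≤ π ^ 2 := sq_nonneg π
      nlinarith
    have h3t : (0:ℝ) ≤ 3 ^ t := by positivity
    nlinarith
  rw [hsplit, hQ0, hQ1]
  rw [div_le_iff₀ (by positivity)]
  have : -((1 - π ^ 2 / 36) / 9) * 3 ^ (2 + t) = -(3 ^ t * (1 - π ^ 2 / 36)) := by
    rw [pow_add]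
    ring
  rw [this]
  linarith

lemma integrable_coeff_dirac {E : Type*} [NormedAddCommGroup E]
    (f : UnitAddCircle → E) (hf : Continuous f) (c : ℝ≥0∞) (hc : c ≠ ∞) (x : UnitAddCircle) :
    Integrable f (c • Measure.dirac x) := by
  refine Integrable.smul_measure ?_ hc
  refine ⟨hf.aestronglyMeasurable, ?_⟩
  rw [HasFiniteIntegral, lintegral_dirac]
  exact ENNReal.coe_lt_top

lemma integral_sternMeasure {E : Type*} [NormedAddCommGroup E] [NormedSpace ℝ E] [CompleteSpace E]
    (n : ℕ) (f : UnitAddCircle → E) (hf : Continuous f) :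
    ∫ x, f x ∂(sternMeasure n) = ((3 : ℝ) ^ n)⁻¹ •
      ∑ m ∈ Finset.range (2 ^ n),
        (stern (2 ^ n + m) : ℝ) • f ((m / 2 ^ n : ℝ) : UnitAddCircle) := by
  rw [sternMeasure, integral_smul_measure]
  rw [integral_finset_sum_measure (fun m _ =>
    integrable_coeff_dirac f hf _ (by simp) _)]
  have h1 : ∀ m ∈ Finset.range (2 ^ n),
      ∫ x, f x ∂((stern (2 ^ n + m) : ℝ≥0∞) • Measure.dirac ((m / 2 ^ n : ℝ) : UnitAddCircle))
      = (stern (2 ^ n + m) : ℝ) • f ((m / 2 ^ n : ℝ) : UnitAddCircle) := by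
    intro m _
    rw [integral_smul_measure, integral_dirac]
    simp
  rw [Finset.sum_congr rfl h1]
  congr 1
  simp [ENNReal.toReal_inv]

lemma fourier_at_point (k : ℤ) (n m : ℕ) :
    fourier (-k) ((m / 2 ^ n : ℝ) : UnitAddCircle) = sternExp k n m := by
  rw [fourier_coe_apply, sternExp]
  congr 1
  push_cast
  field_simp

/-- The Fourier–Stieltjes coefficient ν̂(k) = ∫_𝕋 e^{-2πikx} dν(x) of a measure ν on the 1-torus. -/
def fourierCoeffMeasure (ν : Measure UnitAddCircle) (k : ℤ) : ℂ :=
  ∫ x, fourier (-k) x ∂ν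

lemma coeff_sternMeasure (k : ℤ) (n : ℕ) :
    fourierCoeffMeasure (sternMeasure n) k = ((sternP k n / 3 ^ n : ℝ) : ℂ) := by
  rw [fourierCoeffMeasure, integral_sternMeasure n _ (fourier (-k)).continuous]
  have h1 : ∀ m ∈ Finset.range (2 ^ n),
      (stern (2 ^ n + m) : ℝ) • fourier (-k) ((m / 2 ^ n : ℝ) : UnitAddCircle)
      = (stern (2 ^ n + m) : ℂ) * sternExp k n m := by
    intro m _
    rw [fourier_at_point, Complex.real_smul]
    norm_num
  rw [Finset.sum_congr rfl h1, ← sternS, sternS_eq, Complex.real_smul]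
  push_cast
  ring

lemma re_coeff_sternMeasure (k : ℤ) (n : ℕ) :
    ∫ x, (fourier (-k) x).re ∂(sternMeasure n) = sternP k n / 3 ^ n := by
  have hc : Continuous fun x : UnitAddCircle => (fourier (-k) x).re :=
    Complex.continuous_re.comp (fourier (-k)).continuous
  rw [integral_sternMeasure n _ hc]
  have h1 : ∀ m ∈ Finset.range (2 ^ n),
      (stern (2 ^ n + m) : ℝ) • (fourier (-k) ((m / 2 ^ n : ℝ) : UnitAddCircle)).re
      = ((stern (2 ^ n + m) : ℂ) * sternExp k n m).re := by
    intro m _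
    rw [fourier_at_point, smul_eq_mul, Complex.mul_re]
    simp
  rw [Finset.sum_congr rfl h1, ← Complex.re_sum, ← sternS, sternS_eq, Complex.ofReal_re,
    smul_eq_mul]
  ring

lemma im_coeff_sternMeasure (k : ℤ) (n : ℕ) :
    ∫ x, (fourier (-k) x).im ∂(sternMeasure n) = 0 := by
  have hc : Continuous fun x : UnitAddCircle => (fourier (-k) x).im :=
    Complex.continuous_im.comp (fourier (-k)).continuous
  rw [integral_sternMeasure n _ hc]
  have h1 : ∀ m ∈ Finset.range (2 ^ n),
      (stern (2 ^ n + m) : ℝ) • (fourier (-k) ((m / 2 ^ n : ℝ) : UnitAddCircle)).im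
      = ((stern (2 ^ n + m) : ℂ) * sternExp k n m).im := by
    intro m _
    rw [fourier_at_point, smul_eq_mul, Complex.mul_im]
    simp
  rw [Finset.sum_congr rfl h1, ← Complex.im_sum, ← sternS, sternS_eq, Complex.ofReal_im,
    smul_eq_mul]
  ring

lemma integrable_fourier (k : ℤ) (ν : Measure UnitAddCircle) [IsProbabilityMeasure ν] :
    Integrable (fun x => fourier (-k) x) ν := by
  refine ⟨((fourier (-k)).continuous).aestronglyMeasurable, ?_⟩
  rw [HasFiniteIntegral]
  have h1 : ∀ x : UnitAddCircle, (‖fourier (-k) x‖₊ : ℝ≥0∞) = 1 := by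
    intro x
    have h : ‖fourier (-k) x‖ = 1 := Circle.norm_coe _
    have : ‖fourier (-k) x‖₊ = 1 := NNReal.coe_injective (by simp only [coe_nnnorm, h, NNReal.coe_one])
    rw [this]
    simp
  simp_rw [enorm_eq_nnnorm, h1]
  simp

/-- The weak limit μ is not absolutely continuous w.r.t. Haar measure: indeed μ̂(1) ≠ 0 and
μ̂(2^n) = μ̂(1) for all n ≥ 0, so the coefficients μ̂(k) do not tend to 0 as |k| → ∞. -/
theorem sternLimit_not_absolutelyContinuous (μ : Measure UnitAddCircle)
    (hμ : IsProbabilityMeasure μ)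
    (hlim : ∀ f : C(UnitAddCircle, ℝ),
      Tendsto (fun n => ∫ x, f x ∂(sternMeasure n)) atTop (𝓝 (∫ x, f x ∂μ))) :
    fourierCoeffMeasure μ 1 ≠ 0 ∧
    (∀ n : ℕ, fourierCoeffMeasure μ (2 ^ n) = fourierCoeffMeasure μ 1) ∧
    ¬ Tendsto (fun k : ℤ => fourierCoeffMeasure μ k) (Filter.cocompact ℤ) (𝓝 0) ∧
    ¬ μ.AbsolutelyContinuous (volume : Measure UnitAddCircle) := by
  have hint : ∀ k : ℤ, Integrable (fun x => fourier (-k) x) μ := fun k => integrable_fourier k μ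
  have hre : ∀ k : ℤ, Tendsto (fun n => sternP k n / 3 ^ n) atTop
      (𝓝 ((fourierCoeffMeasure μ k).re)) := by
    intro k
    have hc : Continuous fun x : UnitAddCircle => (fourier (-k) x).re :=
      Complex.continuous_re.comp (fourier (-k)).continuous
    have h := hlim ⟨_, hc⟩
    simp only [ContinuousMap.coe_mk] at h
    rw [funext (re_coeff_sternMeasure k)] at h
    have he : ∫ x, (fourier (-k) x).re ∂μ = (fourierCoeffMeasure μ k).re := by
      rw [fourierCoeffMeasure]
      simpa using integral_re (hint k)
    rwa [he] at h
  have him : ∀ k : ℤ, (fourierCoeffMeasure μ k).im = 0 := by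
    intro k
    have hc : Continuous fun x : UnitAddCircle => (fourier (-k) x).im :=
      Complex.continuous_im.comp (fourier (-k)).continuous
    have h := hlim ⟨_, hc⟩
    simp only [ContinuousMap.coe_mk] at h
    rw [funext (im_coeff_sternMeasure k)] at h
    have h0 : ∫ x, (fourier (-k) x).im ∂μ = 0 :=
      tendsto_nhds_unique h tendsto_const_nhds
    have he : ∫ x, (fourier (-k) x).im ∂μ = (fourierCoeffMeasure μ k).im := by
      rw [fourierCoeffMeasure]
      simpa using integral_im (hint k)
    rw [← he, h0]
  have hofreal : ∀ k : ℤ, fourierCoeffMeasure μ k = (((fourierCoeffMeasure μ k).re : ℝ) : ℂ) :=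
    fun k => Complex.ext (by simp) (by simp [him k])
  have hcpos : 0 < (1 - π ^ 2 / 36) / 9 := by
    have := pi_sq_lt
    nlinarith
  have hr1 : (fourierCoeffMeasure μ 1).re ≤ -((1 - π ^ 2 / 36) / 9) := by
    refine le_of_tendsto (hre 1) ?_
    filter_upwards [eventually_ge_atTop 2] with n hn
    obtain ⟨t, rfl⟩ : ∃ t, n = 2 + t := ⟨n - 2, by omega⟩
    exact sternP_upper t
  have h1ne : fourierCoeffMeasure μ 1 ≠ 0 := by
    rw [hofreal 1]
    simp only [ne_eq, Complex.ofReal_eq_zero]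
    intro h
    rw [h] at hr1
    linarith
  have h2m : ∀ m : ℕ, fourierCoeffMeasure μ (2 ^ m) = fourierCoeffMeasure μ 1 := by
    intro m
    have hshift : Tendsto (fun n => sternP (2 ^ m) n / 3 ^ n) atTop
        (𝓝 ((fourierCoeffMeasure μ 1).re)) := by
      rw [← tendsto_add_atTop_iff_nat m]
      have heq : (fun n => sternP (2 ^ m) (n + m) / 3 ^ (n + m))
          = fun n => sternP 1 n / 3 ^ n := by
        funext t
        rw [show t + m = m + t by omega, sternP_two_pow_shift, pow_add]
        have h3 : (0:ℝ) < 3 ^ t := by positivity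
        have h3' : (0:ℝ) < 3 ^ m := by positivity
        field_simp
      rw [heq]
      exact hre 1
    have hq := tendsto_nhds_unique (hre (2 ^ m)) hshift
    rw [hofreal (2 ^ m), hofreal 1, hq]
  have hnt : ¬ Tendsto (fun k : ℤ => fourierCoeffMeasure μ k) (Filter.cocompact ℤ) (𝓝 0) := by
    intro h
    have hp : Tendsto (fun n : ℕ => (2:ℤ) ^ n) atTop atTop :=
      tendsto_pow_atTop_atTop_of_one_lt (by norm_num)
    have hp2 : Tendsto (fun n : ℕ => (2:ℤ) ^ n) atTop (cocompact ℤ) := by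
      rw [cocompact_eq_atBot_atTop]
      exact hp.mono_right le_sup_right
    have h3 := h.comp hp2
    have h4 : Tendsto (fun _ : ℕ => fourierCoeffMeasure μ 1) atTop (𝓝 0) := by
      refine h3.congr fun n => ?_
      exact h2m n
    exact h1ne (tendsto_nhds_unique tendsto_const_nhds h4)
  refine ⟨h1ne, h2m, hnt, ?_⟩
  intro hac
  apply hnt
  set g : UnitAddCircle → NNReal := fun x => (μ.rnDeriv volume x).toNNReal with hg
  have hgmeas : Measurable g := (Measure.measurable_rnDeriv μ volume).ennreal_toNNReal
  have hLD : μ = volume.withDensity (fun x => ((g x : ℝ≥0∞))) := by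
    rw [← Measure.withDensity_rnDeriv_eq μ volume hac]
    exact withDensity_congr_ae ((Measure.rnDeriv_lt_top μ volume).mono
      fun x hx => (ENNReal.coe_toNNReal hx.ne).symm)
  set F : ℝ → ℂ :=
    Set.indicator (Set.Ioc (0:ℝ) 1) (fun x => ((g ((x : ℝ) : UnitAddCircle) : ℝ) : ℂ)) with hF
  have key : ∀ k : ℤ, fourierCoeffMeasure μ k
      = ∫ v : ℝ, Real.fourierChar (-(v * (k : ℝ))) • F v := by
    intro k
    rw [fourierCoeffMeasure]
    conv_lhs => rw [hLD]
    rw [integral_withDensity_eq_integral_smul hgmeas]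
    rw [← AddCircle.integral_preimage 1 0 (fun x => g x • fourier (-k) x)]
    rw [show (0:ℝ) + 1 = 1 by norm_num]
    rw [← integral_indicator measurableSet_Ioc]
    congr 1
    funext v
    by_cases hv : v ∈ Set.Ioc (0:ℝ) 1
    · rw [Set.indicator_of_mem hv, hF, Set.indicator_of_mem hv]
      rw [Circle.smul_def, Real.fourierChar_apply, fourier_coe_apply, NNReal.smul_def,
        Complex.real_smul]
      have hexp : Complex.exp (2 * ↑π * Complex.I * ↑(-k) * ↑v / ↑(1:ℝ))
          = Complex.exp (↑(2 * π * -(v * (k:ℝ))) * Complex.I) := by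
        congr 1
        push_cast
        ring
      rw [hexp, smul_eq_mul]
      ring
    · rw [Set.indicator_of_notMem hv, hF, Set.indicator_of_notMem hv]
      simp
  have hRL := Real.tendsto_integral_exp_smul_cocompact F
  have hcast : Tendsto (fun k : ℤ => (k : ℝ)) (cocompact ℤ) (cocompact ℝ) := by
    rw [cocompact_eq_cofinite]
    exact Int.tendsto_coe_cofinite
  have hcomp := hRL.comp hcast
  exact hcomp.congr fun k => (key k).symm
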